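/- Let s ≥ 1 and S = {i_1(s+1)+1, …, i_s(s+1)+s} with i_1, …, i_s ∈ ℤ. Then the domination ratio γ̄(ℤ, S) equals 1/(s+1). -/

import Mathlib

open Filter

open scoped Classical in
noncomputable def lowerDensity (U : Set ℤ) : ℝ :=
  Filter.liminf (fun n : ℕ =>
    (((Finset.Icc (-(n:ℤ)) (n:ℤ)).filter (fun m => m ∈ U)).card : ℝ) / (2*(n:ℝ)+1))
    Filter.atTop

/-- `D` is a dominating set of the Cayley digraph `Γ(ℤ, S)`. -/
def IsDominating (S D : Set ℤ) : Prop :=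
  ∀ v : ℤ, v ∈ D ∨ ∃ u ∈ D, ∃ s ∈ S, v = u + s

/-- The domination ratio of `Γ(ℤ, S)`. -/
noncomputable def domRatio (S : Set ℤ) : ℝ :=
  sInf {x : ℝ | ∃ D : Set ℤ, IsDominating S D ∧ x = lowerDensity D}

open scoped Classical

lemma lin_tendsto (a b : ℝ) :
    Tendsto (fun n : ℕ => (a*(n:ℝ) + b)/(2*(n:ℝ)+1)) atTop (nhds (a/2)) := by
  have h1 : Tendsto (fun n : ℕ => (1:ℝ)/(n:ℝ)) atTop (nhds 0) :=
    tendsto_one_div_atTop_nhds_zero_nat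
  have key :
      Tendsto (fun n : ℕ => (a + b*((1:ℝ)/(n:ℝ)))/(2 + (1:ℝ)/(n:ℝ))) atTop
        (nhds ((a + b*0)/(2+0))) :=
    Tendsto.div (tendsto_const_nhds.add (tendsto_const_nhds.mul h1))
      (tendsto_const_nhds.add h1) (by norm_num)
  have he : ((a + b*0)/(2+0)) = a/2 := by ring
  rw [he] at key
  apply key.congr'
  filter_upwards [eventually_gt_atTop 0] with n hn
  have hne : (n:ℝ) ≠ 0 := Nat.cast_ne_zero.2 hn.ne'
  field_simp

lemma count_mult (k : ℕ) (hk : 0 < k) (n : ℕ) [DecidablePred (fun m : ℤ => (k:ℤ) ∣ m)] :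
    ((Finset.Icc (-(n:ℤ)) (n:ℤ)).filter (fun m => (k:ℤ) ∣ m)).card = 2*(n/k)+1 := by
  classical
  have hk' : (0:ℤ) < (k:ℤ) := by exact_mod_cast hk
  have hq : ((n/k : ℕ):ℤ) = (n:ℤ)/(k:ℤ) := by exact_mod_cast Int.natCast_div n k
  have himg : (Finset.Icc (-((n/k : ℕ):ℤ)) ((n/k : ℕ):ℤ)).image (fun j => (k:ℤ)*j)
      = (Finset.Icc (-(n:ℤ)) (n:ℤ)).filter (fun m => (k:ℤ) ∣ m) := by
    ext m
    simp only [Finset.mem_image, Finset.mem_filter, Finset.mem_Icc]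
    constructor
    · rintro ⟨j, ⟨hj1, hj2⟩, rfl⟩
      rw [hq] at hj1 hj2
      have h2 : j * (k:ℤ) ≤ (n:ℤ) := (Int.le_ediv_iff_mul_le hk').1 hj2
      have h1 : (-j) * (k:ℤ) ≤ (n:ℤ) := (Int.le_ediv_iff_mul_le hk').1 (by linarith)
      exact ⟨⟨by linarith, by linarith⟩, ⟨j, rfl⟩⟩
    · rintro ⟨⟨h1, h2⟩, j, rfl⟩
      refine ⟨j, ⟨?_, ?_⟩, rfl⟩
      · rw [hq, ← neg_le_neg_iff, neg_neg] at *
        have := (Int.le_ediv_iff_mul_le hk').2 (show (-j) * (k:ℤ) ≤ (n:ℤ) by linarith)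
        linarith
      · rw [hq]
        exact (Int.le_ediv_iff_mul_le hk').2 (by linarith)
  rw [← himg, Finset.card_image_of_injective _ (mul_right_injective₀ hk'.ne'),
    Int.card_Icc]
  omega

lemma cover_card (T : Finset ℤ) (D : Set ℤ) (hD : IsDominating (↑T) D) (M : ℕ)
    (hM : ∀ t ∈ T, t.natAbs ≤ M) (n : ℕ) :
    2*n+1 ≤ (T.card + 1) *
      ((Finset.Icc (-((n+M:ℕ):ℤ)) ((n+M:ℕ):ℤ)).filter (fun m => m ∈ D)).card := by
  classical
  set F := (Finset.Icc (-((n+M:ℕ):ℤ)) ((n+M:ℕ):ℤ)).filter (fun m => m ∈ D) with hF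
  have hsub : Finset.Icc (-(n:ℤ)) (n:ℤ) ⊆
      F.biUnion (fun u => insert u (T.image (fun t => u + t))) := by
    intro v hv
    simp only [Finset.mem_Icc] at hv
    rcases hD v with hvD | ⟨u, huD, t, htS, rfl⟩
    · refine Finset.mem_biUnion.2 ⟨v, ?_, Finset.mem_insert_self _ _⟩
      simp only [hF, Finset.mem_filter, Finset.mem_Icc]
      refine ⟨⟨?_, ?_⟩, hvD⟩ <;> push_cast <;> omega
    · have ht : t ∈ T := htS
      have habs : |t| ≤ (M:ℤ) := by
        have := hM t ht
        rw [Int.abs_eq_natAbs]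
        exact_mod_cast this
      rw [abs_le] at habs
      refine Finset.mem_biUnion.2 ⟨u, ?_, Finset.mem_insert_of_mem
        (Finset.mem_image.2 ⟨t, ht, rfl⟩)⟩
      simp only [hF, Finset.mem_filter, Finset.mem_Icc]
      refine ⟨⟨?_, ?_⟩, huD⟩ <;> push_cast <;> omega
  have h1 := Finset.card_le_card hsub
  have h2 := Finset.card_biUnion_le (s := F)
    (t := fun u => insert u (T.image (fun t => u + t)))
  have h3 : ∑ u ∈ F, (insert u (T.image (fun t => u + t))).card ≤ F.card * (T.card + 1) := by
    calc ∑ u ∈ F, (insert u (T.image (fun t => u + t))).card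
        ≤ ∑ _u ∈ F, (T.card + 1) := Finset.sum_le_sum (fun u _ =>
          (Finset.card_insert_le _ _).trans (by
            exact Nat.add_le_add_right (Finset.card_image_le (s := T)) 1))
      _ = F.card * (T.card + 1) := by rw [Finset.sum_const, smul_eq_mul]
  have hIcc : (Finset.Icc (-(n:ℤ)) (n:ℤ)).card = 2*n+1 := by
    rw [Int.card_Icc]; omega
  rw [hIcc] at h1
  calc 2*n+1 ≤ F.card * (T.card+1) := le_trans h1 (le_trans h2 h3)
    _ = (T.card+1) * F.card := mul_comm _ _

lemma density_mult (k : ℕ) (hk : 0 < k) :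
    Tendsto (fun n : ℕ => (2*((n/k : ℕ):ℝ)+1)/(2*(n:ℝ)+1)) atTop (nhds (1/(k:ℝ))) := by
  have hk' : (0:ℝ) < (k:ℝ) := by exact_mod_cast hk
  have hg := lin_tendsto (2/(k:ℝ)) (-1)
  have hh := lin_tendsto (2/(k:ℝ)) 1
  have hlim : (2/(k:ℝ))/2 = 1/(k:ℝ) := by field_simp
  rw [hlim] at hg hh
  refine tendsto_of_tendsto_of_tendsto_of_le_of_le hg hh ?_ ?_
  · intro n
    have hden : (0:ℝ) < 2*(n:ℝ)+1 := by positivity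
    have hub : (n:ℝ) < (k:ℝ)*((n/k : ℕ):ℝ) + (k:ℝ) := by
      have h2 := Nat.div_add_mod n k
      have h3 := Nat.mod_lt n hk
      have : n < k*(n/k) + k := by omega
      exact_mod_cast this
    have hnum : 2/(k:ℝ)*(n:ℝ) + -1 ≤ 2*((n/k : ℕ):ℝ)+1 := by
      have hd : (n:ℝ)/(k:ℝ) ≤ ((n/k : ℕ):ℝ) + 1 := by
        rw [div_le_iff₀ hk']; nlinarith
      have : 2/(k:ℝ)*(n:ℝ) = 2 * ((n:ℝ)/(k:ℝ)) := by ring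
      rw [this]; linarith
    exact (div_le_div_iff_of_pos_right hden).2 hnum
  · intro n
    have hden : (0:ℝ) < 2*(n:ℝ)+1 := by positivity
    have hlb : (k:ℝ)*((n/k : ℕ):ℝ) ≤ (n:ℝ) := by
      have : k*(n/k) ≤ n := Nat.mul_div_le n k
      exact_mod_cast this
    have hnum : 2*((n/k : ℕ):ℝ)+1 ≤ 2/(k:ℝ)*(n:ℝ) + 1 := by
      have hd : ((n/k : ℕ):ℝ) ≤ (n:ℝ)/(k:ℝ) := by
        rw [le_div_iff₀ hk']; nlinarith
      have : 2/(k:ℝ)*(n:ℝ) = 2 * ((n:ℝ)/(k:ℝ)) := by ring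
      rw [this]; linarith
    exact (div_le_div_iff_of_pos_right hden).2 hnum

lemma liminf_lb (s : ℕ) (T : Finset ℤ) (hTcard : T.card ≤ s) (D : Set ℤ)
    (hD : IsDominating (↑T) D) :
    1/((s:ℝ)+1) ≤ lowerDensity D := by
  set M : ℕ := T.sup Int.natAbs with hMdef
  have hM : ∀ t ∈ T, t.natAbs ≤ M := fun t ht => Finset.le_sup ht
  set a : ℕ → ℝ := fun n =>
    (((Finset.Icc (-(n:ℤ)) (n:ℤ)).filter (fun m => m ∈ D)).card : ℝ) / (2*(n:ℝ)+1) with ha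
  set b : ℕ → ℝ := fun n =>
    (1/((s:ℝ)+1)) * ((2*(n:ℝ) + (1 - 2*(M:ℝ)))/(2*(n:ℝ)+1)) with hb
  have hs1 : (0:ℝ) < (s:ℝ)+1 := by positivity
  have hbt : Tendsto b atTop (nhds (1/((s:ℝ)+1))) := by
    have h := (lin_tendsto 2 (1 - 2*(M:ℝ))).const_mul (1/((s:ℝ)+1))
    have h2 : (1/((s:ℝ)+1)) * ((2:ℝ)/2) = 1/((s:ℝ)+1) := by norm_num
    rw [h2] at h
    exact h
  have hle : ∀ᶠ n in atTop, b n ≤ a n := by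
    filter_upwards [eventually_ge_atTop M] with n hn
    have hkey := cover_card T D hD M hM (n - M)
    rw [Nat.sub_add_cancel hn] at hkey
    have hkey' : (2*((n:ℝ) - (M:ℝ)) + 1) ≤ ((s:ℝ)+1) *
        (((Finset.Icc (-(n:ℤ)) (n:ℤ)).filter (fun m => m ∈ D)).card : ℝ) := by
      have h1 : (2*(n-M)+1 : ℕ) ≤ (s+1) *
          ((Finset.Icc (-(n:ℤ)) (n:ℤ)).filter (fun m => m ∈ D)).card :=
        le_trans hkey (Nat.mul_le_mul_right _ (by omega))
      have h2 := (Nat.cast_le (α := ℝ)).2 h1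
      push_cast [Nat.cast_sub hn] at h2
      push_cast
      linarith
    have hden : (0:ℝ) < 2*(n:ℝ)+1 := by positivity
    show (1/((s:ℝ)+1)) * ((2*(n:ℝ) + (1 - 2*(M:ℝ)))/(2*(n:ℝ)+1)) ≤ _
    rw [one_div, inv_mul_eq_div, div_div, div_le_div_iff₀ (by positivity) hden]
    nlinarith [hkey', hden.le]
  have hbd : IsBoundedUnder (· ≥ ·) atTop b := hbt.isBoundedUnder_ge
  have hcb : IsCoboundedUnder (· ≥ ·) atTop a := by
    refine isCoboundedUnder_ge_of_eventually_le atTop (x := 1) ?_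
    refine Eventually.of_forall (fun n => ?_)
    have hden : (0:ℝ) < 2*(n:ℝ)+1 := by positivity
    have hc : (((Finset.Icc (-(n:ℤ)) (n:ℤ)).filter (fun m => m ∈ D)).card : ℝ)
        ≤ 2*(n:ℝ)+1 := by
      have h1 : ((Finset.Icc (-(n:ℤ)) (n:ℤ)).filter (fun m => m ∈ D)).card
          ≤ (Finset.Icc (-(n:ℤ)) (n:ℤ)).card := Finset.card_filter_le _ _
      have h2 : (Finset.Icc (-(n:ℤ)) (n:ℤ)).card = 2*n+1 := by
        rw [Int.card_Icc]; omega
      rw [h2] at h1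
      exact_mod_cast h1.trans (le_refl _)
    exact div_le_one_of_le₀ hc hden.le
  calc 1/((s:ℝ)+1) = liminf b atTop := hbt.liminf_eq.symm
    _ ≤ liminf a atTop := liminf_le_liminf hle hbd hcb
    _ = lowerDensity D := rfl

theorem stmt_10 (s : ℕ) (hs : 1 ≤ s) (i : ℤ → ℤ)
    (S : Set ℤ) (hSdef : S = {x : ℤ | ∃ r ∈ Finset.Icc 1 (s:ℤ), x = i r * ((s:ℤ)+1) + r}) :
    domRatio S = 1 / ((s:ℝ) + 1) := by
  set T : Finset ℤ := (Finset.Icc (1:ℤ) (s:ℤ)).image (fun r => i r * ((s:ℤ)+1) + r) with hT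
  have hST : S = ↑T := by
    rw [hSdef]; ext x
    simp only [Set.mem_setOf_eq, hT, Finset.coe_image, Set.mem_image, Finset.mem_coe]
    constructor
    · rintro ⟨r, hr, rfl⟩; exact ⟨r, hr, rfl⟩
    · rintro ⟨r, hr, rfl⟩; exact ⟨r, hr, rfl⟩
  have hTcard : T.card ≤ s := by
    refine le_trans Finset.card_image_le ?_
    rw [Int.card_Icc]; omega
  set D0 : Set ℤ := {m : ℤ | ((s+1 : ℕ):ℤ) ∣ m} with hD0
  have hcast : ((s+1 : ℕ):ℤ) = (s:ℤ)+1 := by push_cast; ring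
  have hdom0 : IsDominating S D0 := by
    intro v
    have hKpos : (0:ℤ) < (s:ℤ)+1 := by positivity
    by_cases hdvd : ((s:ℤ)+1) ∣ v
    · left; show ((s+1:ℕ):ℤ) ∣ v; rw [hcast]; exact hdvd
    · right
      set r : ℤ := v % ((s:ℤ)+1) with hr
      have hr0 : 0 ≤ r := Int.emod_nonneg v hKpos.ne'
      have hrK : r < (s:ℤ)+1 := Int.emod_lt_of_pos v hKpos
      have hrne : r ≠ 0 := fun h => hdvd (Int.dvd_of_emod_eq_zero (by rw [← hr, h]))
      refine ⟨v - (i r * ((s:ℤ)+1) + r), ?_, i r * ((s:ℤ)+1) + r, ?_, by ring⟩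
      · show ((s+1:ℕ):ℤ) ∣ _
        rw [hcast]
        have h1 : ((s:ℤ)+1) ∣ v - r := Int.dvd_self_sub_of_emod_eq rfl
        have h2 : ((s:ℤ)+1) ∣ i r * ((s:ℤ)+1) := dvd_mul_left _ _
        have h3 := h1.sub h2
        rw [show v - (i r * ((s:ℤ)+1) + r) = v - r - i r * ((s:ℤ)+1) by ring]; exact h3
      · rw [hSdef]
        exact ⟨r, Finset.mem_Icc.2 ⟨by omega, by omega⟩, rfl⟩
  have hdens0 : lowerDensity D0 = 1/((s:ℝ)+1) := by
    have hcount : ∀ n : ℕ, (@Finset.filter ℤ (fun m => m ∈ D0)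
        (fun a => Classical.propDecidable _) (Finset.Icc (-(n:ℤ)) (n:ℤ))).card
        = 2*(n/(s+1))+1 := by
      intro n
      have := count_mult (s+1) (by omega) n
      convert this using 2
      simp only [hD0, Set.mem_setOf_eq]
    unfold lowerDensity
    simp only [hcount]
    push_cast
    rw [(density_mult (s+1) (by omega)).liminf_eq]
    push_cast
    ring_nf
  have hmem : 1/((s:ℝ)+1) ∈ {x : ℝ | ∃ D, IsDominating S D ∧ x = lowerDensity D} :=
    ⟨D0, hdom0, hdens0.symm⟩
  have hlb : ∀ x ∈ {x : ℝ | ∃ D, IsDominating S D ∧ x = lowerDensity D},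
      1/((s:ℝ)+1) ≤ x := by
    rintro x ⟨D, hD, rfl⟩
    exact liminf_lb s T hTcard D (hST ▸ hD)
  exact le_antisymm (csInf_le ⟨_, hlb⟩ hmem) (le_csInf ⟨_, hmem⟩ hlb)
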